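/- Let n ≥ 4 and let x : Fin n → ℝ satisfy x_1 ≤ ⋯ ≤ x_n, and suppose that (n−1, n) is the unique pair (i,j) with 1 ≤ i < j ≤ n and x_i + x_j > 0. Then x_n > 0, x_i + x_n ≤ 0 for all 1 ≤ i ≤ n−2, and #{(i,j) : 1 ≤ i < j ≤ n, x_i + x_j < 0} belongs to the set {(s−1) + (n−1)(n−2)/2 : 1 ≤ s ≤ n−2} ∪ {2(s−1) + (n−2)(n−3)/2 : 1 ≤ s ≤ n−2} ∪ {(n−2)(n+1)/2}. -/

import Mathlib

lemma gauss_aux (m : ℕ) : (∑ j ∈ Finset.Icc 1 m, (j - 1)) * 2 = m * (m - 1) := by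
  induction m with
  | zero => simp
  | succ k ih =>
    rw [Finset.sum_Icc_succ_top (by omega : 1 ≤ k + 1)]
    rcases Nat.eq_zero_or_pos k with hk | hk
    · subst hk; simp
    · obtain ⟨j, rfl⟩ : ∃ j, k = j + 1 := ⟨k - 1, by omega⟩
      simp only [Nat.add_sub_cancel] at ih ⊢
      have : (j + 1 + 1) * (j + 1) = (j + 1) * j + 2 * (j + 1) := by ring
      omega



/-- Type DIII, G = SO*(2n), case R⁺ = 1: if (n−1, n) is the unique pair (i,j),
i < j, with x_i + x_j > 0, then x_n > 0, x_i + x_n ≤ 0 for i ≤ n−2, and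
#{(i,j) : i < j, x_i + x_j < 0} lies in
{(s−1) + (n−1)(n−2)/2 : 1 ≤ s ≤ n−2} ∪ {2(s−1) + (n−2)(n−3)/2 : 1 ≤ s ≤ n−2}
∪ {(n−2)(n+1)/2}. -/
theorem stmt17 (n : ℕ) (hn : 4 ≤ n) (x : ℕ → ℝ)
    (hmono : ∀ i j, 1 ≤ i → i ≤ j → j ≤ n → x i ≤ x j)
    (huniq : ∀ i j, 1 ≤ i → i < j → j ≤ n →
      (0 < x i + x j ↔ (i = n - 1 ∧ j = n))) :
    0 < x n ∧ (∀ i, 1 ≤ i → i ≤ n - 2 → x i + x n ≤ 0) ∧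
    ((∃ s, 1 ≤ s ∧ s ≤ n - 2 ∧
        ((Finset.Icc 1 n ×ˢ Finset.Icc 1 n).filter
            (fun p => p.1 < p.2 ∧ x p.1 + x p.2 < 0)).card
          = (s - 1) + (n-1)*(n-2)/2) ∨
     (∃ s, 1 ≤ s ∧ s ≤ n - 2 ∧
        ((Finset.Icc 1 n ×ˢ Finset.Icc 1 n).filter
            (fun p => p.1 < p.2 ∧ x p.1 + x p.2 < 0)).card
          = 2*(s - 1) + (n-2)*(n-3)/2) ∨
     ((Finset.Icc 1 n ×ˢ Finset.Icc 1 n).filter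
         (fun p => p.1 < p.2 ∧ x p.1 + x p.2 < 0)).card = (n-2)*(n+1)/2) := by
  
  obtain ⟨m, rfl⟩ : ∃ m, n = m + 4 := ⟨n - 4, by omega⟩
  simp only [show m + 4 - 1 = m + 3 by omega, show m + 4 - 2 = m + 2 by omega,
    show m + 4 - 3 = m + 1 by omega] at *
  have hpos : 0 < x (m+3) + x (m+4) :=
    (huniq (m+3) (m+4) (by omega) (by omega) le_rfl).2 ⟨rfl, rfl⟩
  have hxn : 0 < x (m+4) := by
    have := hmono (m+3) (m+4) (by omega) (by omega) le_rfl
    linarith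
  have hle : ∀ i, 1 ≤ i → i ≤ m + 2 → x i + x (m+4) ≤ 0 := by
    intro i h1 h2
    by_contra h
    push_neg at h
    have := (huniq i (m+4) h1 (by omega) le_rfl).1 h
    omega
  have hle' : ∀ i, 1 ≤ i → i ≤ m + 2 → x i + x (m+3) ≤ 0 := by
    intro i h1 h2
    by_contra h
    push_neg at h
    have := (huniq i (m+3) h1 (by omega) (by omega)).1 h
    omega
  have hneg : ∀ i, 1 ≤ i → i ≤ m + 2 → x i < 0 := fun i h1 h2 => by
    have := hle i h1 h2; linarith
  refine ⟨hxn, hle, ?_⟩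
  set T := (Finset.Icc 1 (m+4) ×ˢ Finset.Icc 1 (m+4)).filter
      (fun p => p.1 < p.2 ∧ x p.1 + x p.2 < 0) with hT
  have hcard : T.card = ∑ j ∈ Finset.Icc 1 (m+4),
      ((Finset.Icc 1 (m+4)).filter (fun i => i < j ∧ x i + x j < 0)).card := by
    rw [Finset.card_eq_sum_card_fiberwise
      (f := Prod.snd) (t := Finset.Icc 1 (m+4))
      (fun p hp => by
        simp only [Finset.mem_coe, hT, Finset.mem_filter, Finset.mem_product] at hp
        exact hp.1.2)]
    refine Finset.sum_congr rfl fun j hj => ?_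
    have : T.filter (fun p => p.snd = j)
        = ((Finset.Icc 1 (m+4)).filter (fun i => i < j ∧ x i + x j < 0)).map
          ⟨fun i => (i, j), fun a b h => by simpa using congrArg Prod.fst h⟩ := by
      ext ⟨a, b⟩
      simp only [hT, Finset.mem_filter, Finset.mem_product, Finset.mem_map,
        Function.Embedding.coeFn_mk, Prod.mk.injEq]
      constructor
      · rintro ⟨⟨⟨ha, hb⟩, hlt, hneg'⟩, rfl⟩
        exact ⟨a, ⟨ha, hlt, hneg'⟩, rfl⟩
      · rintro ⟨i, ⟨hi, hlt, hneg'⟩, rfl, rfl⟩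
        exact ⟨⟨⟨hi, hj⟩, hlt, hneg'⟩, rfl⟩
    rw [this, Finset.card_map]
  -- split sum
  rw [Finset.sum_Icc_succ_top (by omega : 1 ≤ m + 4),
      show m + 4 = (m + 3) + 1 by ring] at hcard
  rw [Finset.sum_Icc_succ_top (by omega : 1 ≤ m + 3),
      show m + 3 = (m + 2) + 1 by ring] at hcard
  rw [show (m + 2) + 1 = m + 3 by ring, show (m + 3) + 1 = m + 4 by ring] at hcard
  -- the low part
  have hlow : ∀ j ∈ Finset.Icc 1 (m+2),
      ((Finset.Icc 1 (m+4)).filter (fun i => i < j ∧ x i + x j < 0)).card = j - 1 := by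
    intro j hj
    simp only [Finset.mem_Icc] at hj
    have : (Finset.Icc 1 (m+4)).filter (fun i => i < j ∧ x i + x j < 0)
        = Finset.Icc 1 (j-1) := by
      ext i
      simp only [Finset.mem_filter, Finset.mem_Icc]
      constructor
      · rintro ⟨⟨h1, h2⟩, h3, h4⟩; omega
      · rintro ⟨h1, h2⟩
        have hij : i < j := by omega
        refine ⟨⟨h1, by omega⟩, hij, ?_⟩
        have hxj : x j < 0 := hneg j hj.1 hj.2
        have : x i ≤ x j := hmono i j h1 (by omega) (by omega)
        linarith
    rw [this, Nat.card_Icc]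
    omega
  rw [Finset.sum_congr rfl hlow] at hcard
  have hgauss := gauss_aux (m+2)
  simp only [show m + 2 - 1 = m + 1 by omega] at hgauss
  -- j = m+3 fiber
  set u := ((Finset.Icc 1 (m+2)).filter (fun i => x i + x (m+3) = 0)).card with hu
  set t := ((Finset.Icc 1 (m+2)).filter (fun i => x i + x (m+4) = 0)).card with ht
  have hu_le : u ≤ m + 2 := le_trans (Finset.card_filter_le _ _) (by rw [Nat.card_Icc]; omega)
  have ht_le : t ≤ m + 2 := le_trans (Finset.card_filter_le _ _) (by rw [Nat.card_Icc]; omega)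
  have hfib1 : ((Finset.Icc 1 (m+4)).filter (fun i => i < m+3 ∧ x i + x (m+3) < 0)).card
      = (m + 2) - u := by
    have heq : (Finset.Icc 1 (m+4)).filter (fun i => i < m+3 ∧ x i + x (m+3) < 0)
        = (Finset.Icc 1 (m+2)).filter (fun i => ¬ (x i + x (m+3) = 0)) := by
      ext i
      simp only [Finset.mem_filter, Finset.mem_Icc]
      constructor
      · rintro ⟨⟨h1, h2⟩, h3, h4⟩
        exact ⟨⟨h1, by omega⟩, by linarith⟩
      · rintro ⟨⟨h1, h2⟩, h3⟩
        have := hle' i h1 h2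
        refine ⟨⟨h1, by omega⟩, by omega, lt_of_le_of_ne this h3⟩
    rw [heq]
    have := Finset.card_filter_add_card_filter_not
      (s := Finset.Icc 1 (m+2)) (p := fun i => x i + x (m+3) = 0)
    rw [Nat.card_Icc] at this
    omega
  have hfib2 : ((Finset.Icc 1 (m+4)).filter (fun i => i < m+4 ∧ x i + x (m+4) < 0)).card
      = (m + 2) - t := by
    have heq : (Finset.Icc 1 (m+4)).filter (fun i => i < m+4 ∧ x i + x (m+4) < 0)
        = (Finset.Icc 1 (m+2)).filter (fun i => ¬ (x i + x (m+4) = 0)) := by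
      ext i
      simp only [Finset.mem_filter, Finset.mem_Icc]
      constructor
      · rintro ⟨⟨h1, h2⟩, h3, h4⟩
        refine ⟨⟨h1, ?_⟩, by linarith⟩
        by_contra hi
        have : i = m + 3 := by omega
        subst this
        linarith
      · rintro ⟨⟨h1, h2⟩, h3⟩
        have := hle i h1 h2
        refine ⟨⟨h1, by omega⟩, by omega, lt_of_le_of_ne this h3⟩
    rw [heq]
    have := Finset.card_filter_add_card_filter_not
      (s := Finset.Icc 1 (m+2)) (p := fun i => x i + x (m+4) = 0)
    rw [Nat.card_Icc] at this
    omega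
  rw [hfib1, hfib2] at hcard
  set S0 := ∑ j ∈ Finset.Icc 1 (m+2), (j - 1) with hS0
  -- now hcard : T.card = S0 + (m+2-u) + (m+2-t), hgauss : S0 * 2 = (m+2)*(m+1)
  set K := (m+2) * (m+1) with hK
  have hr1 : (m+3) * (m+2) = K + 2*(m+2) := by rw [hK]; ring
  have hr2 : (m+2) * (m+5) = K + 4*(m+2) := by rw [hK]; ring
  rw [show m + 4 + 1 = m + 5 by ring, hr1, hr2]
  by_cases h0 : u = 0 ∧ t = 0
  · right; right
    omega
  · by_cases hx : x (m+3) = x (m+4)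
    · -- u = t
      have hut : u = t := by
        rw [hu, ht]
        congr 1
        apply Finset.filter_congr
        intro i _
        rw [hx]
      right; left
      exact ⟨m + 3 - t, by omega, by omega, by omega⟩
    · -- disjoint
      have hlt : x (m+3) < x (m+4) :=
        lt_of_le_of_ne (hmono (m+3) (m+4) (by omega) (by omega) le_rfl) hx
      have hdisj : Disjoint ((Finset.Icc 1 (m+2)).filter (fun i => x i + x (m+3) = 0))
          ((Finset.Icc 1 (m+2)).filter (fun i => x i + x (m+4) = 0)) := by
        rw [Finset.disjoint_left]
        intro i h1 h2
        simp only [Finset.mem_filter] at h1 h2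
        have : x (m+3) = x (m+4) := by linarith [h1.2, h2.2]
        exact hx this
      have hsum : u + t ≤ m + 2 := by
        have hsub : ((Finset.Icc 1 (m+2)).filter (fun i => x i + x (m+3) = 0))
            ∪ ((Finset.Icc 1 (m+2)).filter (fun i => x i + x (m+4) = 0))
            ⊆ Finset.Icc 1 (m+2) :=
          Finset.union_subset (Finset.filter_subset _ _) (Finset.filter_subset _ _)
        have := Finset.card_le_card hsub
        rw [Finset.card_union_of_disjoint hdisj, Nat.card_Icc] at this
        omega
      left
      exact ⟨m + 3 - (u + t), by omega, by omega, by omega⟩
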